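/- Define u_t⁺(λ) = e^{2t}λ + 2e^{t}(e^{t} − 1)(√(1 + λ) + 1) for t ≥ 0, λ ≥ 0, and define φ₊(z) = −2z − 2(√(1 + z) + 1) for z ≥ 0. Then for every λ ≥ 0: u_0⁺(λ) = λ, u_t⁺(λ) ≥ 0 for all t ≥ 0, and t ↦ u_t⁺(λ) is differentiable on [0,∞) with (d/dt) u_t⁺(λ) = −φ₊(u_t⁺(λ)) for all t ≥ 0. (In particular √(1 + u_t⁺(λ)) = e^{t}√(1 + λ) + e^{t} − 1.) -/

import Mathlib

/-- `u_t⁺(λ) = e^{2t}λ + 2e^{t}(e^{t}-1)(√(1+λ) + 1)`. -/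
noncomputable def uPlus (t lam : ℝ) : ℝ :=
  Real.exp (2 * t) * lam + 2 * Real.exp t * (Real.exp t - 1) * (Real.sqrt (1 + lam) + 1)

/-- `φ₊(z) = -2z - 2(√(1+z) + 1)`. -/
noncomputable def phiPlus (z : ℝ) : ℝ := -2 * z - 2 * (Real.sqrt (1 + z) + 1)

lemma sqrt_uPlus (lam : ℝ) (hlam : 0 ≤ lam) (t : ℝ) (ht : 0 ≤ t) :
    Real.sqrt (1 + uPlus t lam) = Real.exp t * Real.sqrt (1 + lam) + Real.exp t - 1 := by
  set s := Real.sqrt (1 + lam) with hsdef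
  have hs0 : 0 ≤ s := Real.sqrt_nonneg _
  have hs2 : s ^ 2 = 1 + lam := Real.sq_sqrt (by linarith)
  have he1 : (1 : ℝ) ≤ Real.exp t := Real.one_le_exp ht
  have he0 : 0 < Real.exp t := Real.exp_pos t
  have h2 : Real.exp (2 * t) = Real.exp t * Real.exp t := by
    rw [two_mul, Real.exp_add]
  have key : 1 + uPlus t lam = (Real.exp t * s + Real.exp t - 1) ^ 2 := by
    unfold uPlus
    rw [h2]; nlinarith [hs2]
  rw [key, Real.sqrt_sq (by nlinarith)]

theorem stmt19 :
    ∀ lam : ℝ, 0 ≤ lam →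
      uPlus 0 lam = lam ∧
      (∀ t : ℝ, 0 ≤ t → 0 ≤ uPlus t lam) ∧
      (∀ t : ℝ, 0 ≤ t →
        HasDerivAt (fun s => uPlus s lam) (-phiPlus (uPlus t lam)) t) ∧
      (∀ t : ℝ, 0 ≤ t →
        Real.sqrt (1 + uPlus t lam) = Real.exp t * Real.sqrt (1 + lam) + Real.exp t - 1) := by
  intro lam hlam
  have hs0 : 0 ≤ Real.sqrt (1 + lam) := Real.sqrt_nonneg _
  refine ⟨?_, ?_, ?_, sqrt_uPlus lam hlam⟩
  · simp [uPlus]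
  · intro t ht
    have he1 : (1 : ℝ) ≤ Real.exp t := Real.one_le_exp ht
    have h2 : 0 < Real.exp (2 * t) := Real.exp_pos _
    unfold uPlus
    nlinarith [mul_nonneg (mul_nonneg (by linarith : (0:ℝ) ≤ 2 * Real.exp t)
      (by linarith : (0:ℝ) ≤ Real.exp t - 1)) (by linarith : (0:ℝ) ≤ Real.sqrt (1 + lam) + 1)]
  · intro t ht
    set C := Real.sqrt (1 + lam) + 1 with hC
    have hd : HasDerivAt (fun u => uPlus u lam)
        (2 * Real.exp (2 * t) * lam +
          2 * (Real.exp t * Real.exp t + Real.exp t * (Real.exp t - 1)) * C) t := by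
      unfold uPlus
      have h1 : HasDerivAt (fun u : ℝ => Real.exp (2 * u) * lam)
          (2 * Real.exp (2 * t) * lam) t := by
        have := ((hasDerivAt_id t).const_mul (2 : ℝ)).exp
        simpa [mul_comm, mul_assoc, mul_left_comm] using this.mul_const lam
      have h2 : HasDerivAt (fun u : ℝ => 2 * Real.exp u * (Real.exp u - 1) * C)
          (2 * (Real.exp t * Real.exp t + Real.exp t * (Real.exp t - 1)) * C) t := by
        have hb : HasDerivAt (fun u : ℝ => Real.exp u * (Real.exp u - 1))
            (Real.exp t * Real.exp t + Real.exp t * (Real.exp t - 1)) t := by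
          have := (Real.hasDerivAt_exp t).mul ((Real.hasDerivAt_exp t).sub_const 1)
          exact this.congr_deriv (by ring)
        have := (hb.const_mul (2 : ℝ)).mul_const C
        have hf : (fun u : ℝ => 2 * Real.exp u * (Real.exp u - 1) * C) = fun y => 2 * (Real.exp y * (Real.exp y - 1)) * C := by
          funext u; ring
        rw [hf]; exact this
      exact h1.add h2
    convert hd using 1
    have hsq := sqrt_uPlus lam hlam t ht
    have heq : -phiPlus (uPlus t lam) =
        2 * uPlus t lam + 2 * ((Real.exp t * Real.sqrt (1 + lam) + Real.exp t - 1) + 1) := by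
      simp only [phiPlus, hsq]; ring
    rw [heq]
    unfold uPlus
    rw [show Real.exp (2 * t) = Real.exp t * Real.exp t from by rw [two_mul, Real.exp_add]]
    ring
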